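/- Let n ≥ 2, I a finite set of cardinality n, (x_i)_{i∈I} points in ℝ², and k ∈ I. Then 2 ∑_{i∈I, i≠k} |x_i − x_k|² ≤ ∑_{i∈I} ∑_{m∈I} |x_i − x_m|², provided k realizes the maximum of k ↦ ∑_{i≠k}|x_i−x_k|² (in fact the bound 2 max_{k∈I} ∑_{i∈I, i≠k} |x_i − x_k|² ≤ ∑_{i,m∈I} |x_i − x_m|² holds). -/

import Mathlib

open Real

set_option maxRecDepth 4000

lemma key9 {ι : Type*} [DecidableEq ι] (I : Finset ι) (x : ι → EuclideanSpace ℝ (Fin 2))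
    (k : ι) (hk : k ∈ I) :
    2 * ∑ i ∈ I.erase k, ‖x i - x k‖ ^ 2 ≤ ∑ i ∈ I, ∑ m ∈ I, ‖x i - x m‖ ^ 2 := by
  set a : ι → EuclideanSpace ℝ (Fin 2) := fun i => x i - x k with ha
  set S : ℝ := ∑ i ∈ I, ‖a i‖ ^ 2 with hSdef
  set T : EuclideanSpace ℝ (Fin 2) := ∑ i ∈ I, a i with hT
  have hak : a k = 0 := by simp [ha]
  have hS : ∑ i ∈ I.erase k, ‖x i - x k‖ ^ 2 = S := by
    rw [hSdef]
    exact Finset.sum_erase _ (by simp [ha])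
  have hxa : ∀ i m : ι, x i - x m = a i - a m := by
    intro i m; simp [ha]
  have htotal : ∑ i ∈ I, ∑ m ∈ I, ‖x i - x m‖ ^ 2
      = 2 * I.card * S - 2 * ‖T‖ ^ 2 := by
    have hexp : ∀ i m : ι, ‖x i - x m‖ ^ 2
        = ‖a i‖ ^ 2 + ‖a m‖ ^ 2 - 2 * inner ℝ (a i) (a m) := by
      intro i m
      rw [hxa i m, @norm_sub_sq_real]
      ring
    have row : ∀ i ∈ I, ∑ m ∈ I, ‖x i - x m‖ ^ 2
        = (I.card : ℝ) * ‖a i‖ ^ 2 + S - 2 * inner ℝ (a i) T := by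
      intro i _
      calc ∑ m ∈ I, ‖x i - x m‖ ^ 2
          = ∑ m ∈ I, (‖a i‖ ^ 2 + ‖a m‖ ^ 2 - 2 * inner ℝ (a i) (a m)) :=
            Finset.sum_congr rfl fun m _ => hexp i m
        _ = (∑ _m ∈ I, ‖a i‖ ^ 2) + (∑ m ∈ I, ‖a m‖ ^ 2)
              - 2 * ∑ m ∈ I, (inner ℝ (a i) (a m) : ℝ) := by
            rw [Finset.sum_sub_distrib, Finset.sum_add_distrib, ← Finset.mul_sum]
        _ = (I.card : ℝ) * ‖a i‖ ^ 2 + S - 2 * inner ℝ (a i) T := by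
            rw [Finset.sum_const, nsmul_eq_mul, ← hSdef, hT, inner_sum]
    calc ∑ i ∈ I, ∑ m ∈ I, ‖x i - x m‖ ^ 2
        = ∑ i ∈ I, ((I.card : ℝ) * ‖a i‖ ^ 2 + S - 2 * inner ℝ (a i) T) :=
          Finset.sum_congr rfl row
      _ = ((I.card : ℝ) * ∑ i ∈ I, ‖a i‖ ^ 2) + (∑ _i ∈ I, S)
            - 2 * ∑ i ∈ I, (inner ℝ (a i) T : ℝ) := by
          rw [Finset.sum_sub_distrib, Finset.sum_add_distrib, ← Finset.mul_sum,
            ← Finset.mul_sum]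
      _ = (I.card : ℝ) * S + (I.card : ℝ) * S - 2 * (inner ℝ T T : ℝ) := by
          rw [← hSdef, Finset.sum_const, nsmul_eq_mul, ← sum_inner, ← hT]
      _ = 2 * I.card * S - 2 * ‖T‖ ^ 2 := by
          rw [real_inner_self_eq_norm_sq]; ring
  have hTS : ‖T‖ ^ 2 ≤ ((I.card : ℝ) - 1) * S := by
    have hT' : T = ∑ i ∈ I.erase k, a i := by
      rw [hT, ← Finset.sum_erase _ (by simp [ha] : a k = 0)]
    have h1 : ‖T‖ ≤ ∑ i ∈ I.erase k, ‖a i‖ := by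
      rw [hT']; exact norm_sum_le _ _
    have h2 : ‖T‖ ^ 2 ≤ (∑ i ∈ I.erase k, ‖a i‖) ^ 2 :=
      pow_le_pow_left₀ (norm_nonneg _) h1 2
    have h3 : (∑ i ∈ I.erase k, ‖a i‖) ^ 2
        ≤ ((I.erase k).card : ℝ) * ∑ i ∈ I.erase k, ‖a i‖ ^ 2 := by
      exact sq_sum_le_card_mul_sum_sq
    have h4 : ∑ i ∈ I.erase k, ‖a i‖ ^ 2 = S := by
      rw [hSdef]; exact Finset.sum_erase _ (by simp [ha])
    have h5 : ((I.erase k).card : ℝ) = (I.card : ℝ) - 1 := by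
      rw [Finset.card_erase_of_mem hk]
      have : 1 ≤ I.card := Finset.card_pos.mpr ⟨k, hk⟩
      push_cast [this]; ring
    calc ‖T‖ ^ 2 ≤ ((I.erase k).card : ℝ) * ∑ i ∈ I.erase k, ‖a i‖ ^ 2 := h2.trans h3
      _ = ((I.card : ℝ) - 1) * S := by rw [h4, h5]
  have hSnn : 0 ≤ S := Finset.sum_nonneg fun i _ => by positivity
  rw [hS, htotal]
  nlinarith [hTS, hSnn]


/-- For a finite family of at least two points in ℝ²,
2 max_{k∈I} ∑_{i∈I, i≠k} |xᵢ − x_k|² ≤ ∑_{i,m∈I} |xᵢ − x_m|². -/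
theorem stmt9 {ι : Type*} [DecidableEq ι] (I : Finset ι) (hI : 2 ≤ I.card)
    (x : ι → EuclideanSpace ℝ (Fin 2)) :
    2 * I.sup' (Finset.card_pos.mp (by omega))
        (fun k => ∑ i ∈ I.erase k, ‖x i - x k‖ ^ 2)
      ≤ ∑ i ∈ I, ∑ m ∈ I, ‖x i - x m‖ ^ 2 := by
  have hne : I.Nonempty := Finset.card_pos.mp (by omega)
  obtain ⟨k, hk, hkeq⟩ := Finset.exists_mem_eq_sup' hne
    (fun k => ∑ i ∈ I.erase k, ‖x i - x k‖ ^ 2)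
  rw [hkeq]
  exact key9 I x k hk
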